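/- Let V be a complex inner product space, let (a_n)_{n∈ℤ} be a family of linear maps a_n : V → V, and let R : V → V be a linear map such that there exist a constant M > 0 and a natural number s with ‖a_n b‖ ≤ M·(|n| + 1)^s·‖R b‖ for all n ∈ ℤ and all b ∈ V. Let f : ℝ → ℂ be a smooth 2π-periodic function with Fourier coefficients f̂_n. Then for every b ∈ V the series Σ_{n∈ℤ} f̂_n a_n b converges absolutely in the completion of V, the resulting map Y₀(f) : b ↦ Σ_{n∈ℤ} f̂_n a_n b is linear, and it satisfies the energy bound ‖Y₀(f) b‖ ≤ M·(Σ_{n∈ℤ} (|n|+1)^s |f̂_n|)·‖R b‖ for all b ∈ V, where the constant Σ_{n∈ℤ} (|n|+1)^s |f̂_n| is finite. -/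

import Mathlib

open Real MeasureTheory

/-- The `n`-th Fourier coefficient of a `2π`-periodic function `f : ℝ → ℂ`:
`f̂_n = (1/2π) ∫₀^{2π} f(θ) e^{-inθ} dθ`. -/
noncomputable def fourierCoefficient (f : ℝ → ℂ) (n : ℤ) : ℂ :=
  (1 / (2 * Real.pi)) * ∫ θ in (0:ℝ)..(2 * Real.pi), f θ * Complex.exp (-Complex.I * n * θ)

lemma periodic_deriv_aux {f : ℝ → ℂ} {c : ℝ} (h : Function.Periodic f c) :
    Function.Periodic (deriv f) c := by
  intro x
  have h2 : (fun y => f (y + c)) = f := funext h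
  conv_lhs => rw [← deriv_comp_add_const f c x, h2]

lemma exp_hasDerivAt (c : ℂ) (x : ℝ) :
    HasDerivAt (fun θ : ℝ => Complex.exp (c * θ)) (c * Complex.exp (c * x)) x := by
  have h1 : HasDerivAt (fun z : ℂ => c * z) c (x : ℂ) := by
    simpa using (hasDerivAt_id (x:ℂ)).const_mul c
  have h2 : HasDerivAt (fun z : ℂ => Complex.exp (c * z)) (c * Complex.exp (c * x)) (x : ℂ) := by
    exact ((Complex.hasDerivAt_exp (c * x)).comp (x:ℂ) h1).congr_deriv (mul_comm _ _)
  exact h2.comp_ofReal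

lemma norm_exp_aux (c : ℂ) (hc : c.re = 0) : ‖Complex.exp c‖ = 1 := by
  simp [Complex.norm_exp, hc]

lemma fourierCoefficient_deriv {f : ℝ → ℂ} (hf : ContDiff ℝ (⊤:ℕ∞) f)
    (hper : Function.Periodic f (2 * Real.pi)) (n : ℤ) :
    fourierCoefficient (deriv f) n = (Complex.I * n) * fourierCoefficient f n := by
  set c : ℂ := -Complex.I * n with hc
  have hu : ∀ x ∈ Set.uIcc (0:ℝ) (2*Real.pi), HasDerivAt f (deriv f x) x := fun x _ =>
    ((hf.differentiable (by simp)) x).hasDerivAt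
  have hv : ∀ x ∈ Set.uIcc (0:ℝ) (2*Real.pi),
      HasDerivAt (fun θ : ℝ => Complex.exp (c * θ)) (c * Complex.exp (c * x)) x := fun x _ =>
    exp_hasDerivAt c x
  have hcont : Continuous fun x : ℝ => Complex.exp (c * x) :=
    Complex.continuous_exp.comp (continuous_const.mul Complex.continuous_ofReal)
  have hu' : IntervalIntegrable (deriv f) volume 0 (2*Real.pi) :=
    (hf.continuous_deriv (mod_cast le_top)).intervalIntegrable _ _
  have hv' : IntervalIntegrable (fun x : ℝ => c * Complex.exp (c * x)) volume 0 (2*Real.pi) :=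
    (continuous_const.mul hcont).intervalIntegrable _ _
  have ibp := intervalIntegral.integral_mul_deriv_eq_deriv_mul hu hv hu' hv'
  have hexp1 : Complex.exp (c * (2*Real.pi : ℝ)) = 1 := by
    have := Complex.exp_int_mul_two_pi_mul_I (-n)
    rw [← this]
    congr 1
    push_cast [hc]
    ring
  have hf2 : f (2*Real.pi) = f 0 := by simpa using hper 0
  have hpull : ∫ x in (0:ℝ)..(2*Real.pi), f x * (c * Complex.exp (c * x))
      = c * ∫ x in (0:ℝ)..(2*Real.pi), f x * Complex.exp (c * x) := by
    rw [← intervalIntegral.integral_const_mul]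
    congr 1; funext x; ring
  rw [hpull, hexp1, hf2] at ibp
  have key : ∫ x in (0:ℝ)..(2*Real.pi), deriv f x * Complex.exp (c * x)
      = (Complex.I * n) * ∫ x in (0:ℝ)..(2*Real.pi), f x * Complex.exp (c * x) := by
    have : Complex.exp (c * (0:ℝ)) = 1 := by simp
    rw [this] at ibp
    have : (Complex.I * n) = -c := by rw [hc]; ring
    rw [this]
    linear_combination ibp
  unfold fourierCoefficient
  rw [← hc, key]
  ring

lemma periodic_iteratedDeriv {f : ℝ → ℂ} (hper : Function.Periodic f (2 * Real.pi)) (k : ℕ) :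
    Function.Periodic (iteratedDeriv k f) (2 * Real.pi) := by
  induction k with
  | zero => simpa [iteratedDeriv_zero] using hper
  | succ k ih => rw [iteratedDeriv_succ]; exact periodic_deriv_aux ih

lemma contDiff_iteratedDeriv {f : ℝ → ℂ} (hf : ContDiff ℝ (⊤:ℕ∞) f) (k : ℕ) :
    ContDiff ℝ (⊤:ℕ∞) (iteratedDeriv k f) := by
  rw [iteratedDeriv_eq_iterate]
  exact hf.iterate_deriv k

lemma fourierCoefficient_iteratedDeriv {f : ℝ → ℂ} (hf : ContDiff ℝ (⊤:ℕ∞) f)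
    (hper : Function.Periodic f (2 * Real.pi)) (k : ℕ) (n : ℤ) :
    fourierCoefficient (iteratedDeriv k f) n = (Complex.I * n) ^ k * fourierCoefficient f n := by
  induction k with
  | zero => simp [iteratedDeriv_zero]
  | succ k ih =>
    rw [iteratedDeriv_succ,
      fourierCoefficient_deriv (contDiff_iteratedDeriv hf k) (periodic_iteratedDeriv hper k) n,
      ih, pow_succ]
    ring

lemma norm_fourierCoefficient_le {g : ℝ → ℂ} (hg : Continuous g) :
    ∃ C : ℝ, 0 ≤ C ∧ ∀ n : ℤ, ‖fourierCoefficient g n‖ ≤ C := by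
  obtain ⟨C₀, hC₀⟩ := (isCompact_Icc (a := (0:ℝ)) (b := 2*Real.pi)).exists_bound_of_continuousOn
    hg.continuousOn
  refine ⟨max C₀ 0, le_max_right _ _, fun n => ?_⟩
  have h2π : (0:ℝ) < 2 * Real.pi := by positivity
  have hbd : ∀ x ∈ Set.uIoc (0:ℝ) (2*Real.pi),
      ‖g x * Complex.exp (-Complex.I * n * x)‖ ≤ max C₀ 0 := by
    intro x hx
    rw [Set.uIoc_of_le h2π.le] at hx
    have hx' : x ∈ Set.Icc (0:ℝ) (2*Real.pi) := Set.Ioc_subset_Icc_self hx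
    rw [norm_mul, norm_exp_aux _ (by simp), mul_one]
    exact le_trans (hC₀ x hx') (le_max_left _ _)
  have hint := intervalIntegral.norm_integral_le_of_norm_le_const hbd
  unfold fourierCoefficient
  rw [norm_mul]
  have h1 : ‖(1 / (2 * (Real.pi:ℂ)))‖ = 1 / (2 * Real.pi) := by
    rw [show (1 / (2 * (Real.pi:ℂ))) = ((1 / (2 * Real.pi) : ℝ) : ℂ) by push_cast; ring,
      Complex.norm_real, Real.norm_eq_abs, abs_of_pos (by positivity)]
  rw [h1]
  calc 1 / (2*Real.pi) * ‖∫ θ in (0:ℝ)..(2*Real.pi), g θ * Complex.exp (-Complex.I * n * θ)‖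
      ≤ 1 / (2*Real.pi) * (max C₀ 0 * |2*Real.pi - 0|) := by
        apply mul_le_mul_of_nonneg_left hint (by positivity)
    _ = max C₀ 0 := by rw [sub_zero, abs_of_pos h2π]; field_simp

lemma uniform_decay {f : ℝ → ℂ} (hf : ContDiff ℝ (⊤:ℕ∞) f)
    (hper : Function.Periodic f (2 * Real.pi)) (k : ℕ) :
    ∃ D : ℝ, 0 ≤ D ∧ ∀ n : ℤ, (|(n:ℝ)| + 1) ^ k * ‖fourierCoefficient f n‖ ≤ D := by
  obtain ⟨C, hC0, hC⟩ := norm_fourierCoefficient_le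
    ((contDiff_iteratedDeriv hf k).continuous)
  refine ⟨2 ^ k * C + ‖fourierCoefficient f 0‖, by positivity, fun n => ?_⟩
  rcases eq_or_ne n 0 with rfl | hn
  · simp only [Int.cast_zero, abs_zero, zero_add, one_pow, one_mul]
    exact le_add_of_nonneg_left (by positivity)
  · have hkey : |(n:ℝ)| ^ k * ‖fourierCoefficient f n‖ ≤ C := by
      have := hC n
      rw [fourierCoefficient_iteratedDeriv hf hper k n, norm_mul, norm_pow, norm_mul,
        Complex.norm_I, one_mul, Complex.norm_intCast] at this
      convert this using 3
    have h1 : (1:ℝ) ≤ |(n:ℝ)| := by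
      rw [show ((n:ℝ)) = ((n:ℤ):ℝ) from rfl, ← Int.cast_abs]
      exact_mod_cast Int.one_le_abs hn
    have h2 : (|(n:ℝ)| + 1) ^ k ≤ 2 ^ k * |(n:ℝ)| ^ k := by
      rw [← mul_pow]
      exact pow_le_pow_left₀ (by positivity) (by linarith) k
    calc (|(n:ℝ)| + 1) ^ k * ‖fourierCoefficient f n‖
        ≤ 2 ^ k * |(n:ℝ)| ^ k * ‖fourierCoefficient f n‖ :=
          mul_le_mul_of_nonneg_right h2 (norm_nonneg _)
      _ = 2 ^ k * (|(n:ℝ)| ^ k * ‖fourierCoefficient f n‖) := by ring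
      _ ≤ 2 ^ k * C := by
          apply mul_le_mul_of_nonneg_left hkey (by positivity)
      _ ≤ 2 ^ k * C + ‖fourierCoefficient f 0‖ := le_add_of_nonneg_right (norm_nonneg _)

lemma summable_majorant : Summable (fun n : ℤ => ((|(n:ℝ)| + 1) ^ 2)⁻¹) := by
  have base : Summable (fun m : ℕ => (((m:ℝ) + 1) ^ 2)⁻¹) := by
    have h2 : Summable (fun m : ℕ => ((m:ℝ) ^ 2)⁻¹) := by
      simpa [one_div] using Real.summable_one_div_nat_pow.mpr (by norm_num : 1 < 2)
    have := (summable_nat_add_iff 1).mpr h2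
    simpa using this
  apply Summable.of_nat_of_neg
  · simpa using base
  · simpa using base

/-- Given linear maps `a_n : V → V` on a complex inner product space satisfying the energy
bound `‖a_n b‖ ≤ M (|n|+1)^s ‖R b‖` and a smooth `2π`-periodic `f`, the series
`Σ_{n∈ℤ} f̂_n a_n b` converges absolutely in the completion of `V`, the resulting map
`Y₀(f) : b ↦ Σ_{n∈ℤ} f̂_n a_n b` is linear, and it satisfies the energy bound
`‖Y₀(f) b‖ ≤ M (Σ_{n∈ℤ} (|n|+1)^s |f̂_n|) ‖R b‖`, the constant being finite. -/
theorem smeared_operator_exists {V : Type*} [NormedAddCommGroup V] [InnerProductSpace ℂ V]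
    (a : ℤ → V →ₗ[ℂ] V) (R : V →ₗ[ℂ] V) (M : ℝ) (hM : 0 < M) (s : ℕ)
    (hbound : ∀ (n : ℤ) (b : V), ‖a n b‖ ≤ M * (|(n : ℝ)| + 1) ^ s * ‖R b‖)
    (f : ℝ → ℂ) (hf : ContDiff ℝ (⊤ : ℕ∞) f)
    (hper : Function.Periodic f (2 * Real.pi)) :
    Summable (fun n : ℤ => (|(n : ℝ)| + 1) ^ s * ‖fourierCoefficient f n‖) ∧
    (∀ b : V, Summable (fun n : ℤ => ‖fourierCoefficient f n • a n b‖)) ∧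
    ∃ Y : V →ₗ[ℂ] UniformSpace.Completion V,
      (∀ b : V,
        Y b = ∑' n : ℤ, ((fourierCoefficient f n • a n b : V) : UniformSpace.Completion V)) ∧
      ∀ b : V,
        ‖Y b‖ ≤ M * (∑' n : ℤ, (|(n : ℝ)| + 1) ^ s * ‖fourierCoefficient f n‖) * ‖R b‖ := by
  obtain ⟨D, hD0, hD⟩ := uniform_decay hf hper (s + 2)
  -- Part 1 : summability of the weights
  have hS : Summable (fun n : ℤ => (|(n : ℝ)| + 1) ^ s * ‖fourierCoefficient f n‖) := by
    refine Summable.of_nonneg_of_le (fun n => by positivity) (fun n => ?_)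
      (summable_majorant.mul_left D)
    have hpos : (0:ℝ) < (|(n:ℝ)| + 1) ^ 2 := by positivity
    rw [mul_comm D, ← div_eq_inv_mul, le_div_iff₀ hpos]
    calc (|(n:ℝ)| + 1) ^ s * ‖fourierCoefficient f n‖ * (|(n:ℝ)| + 1) ^ 2
        = (|(n:ℝ)| + 1) ^ (s + 2) * ‖fourierCoefficient f n‖ := by rw [pow_add]; ring
      _ ≤ D := hD n
  -- Part 2 : summability of the series
  have hS2 : ∀ b : V, Summable (fun n : ℤ => ‖fourierCoefficient f n • a n b‖) := by
    intro b
    refine Summable.of_nonneg_of_le (fun n => norm_nonneg _) (fun n => ?_)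
      (hS.mul_left (M * ‖R b‖))
    rw [norm_smul]
    calc ‖fourierCoefficient f n‖ * ‖a n b‖
        ≤ ‖fourierCoefficient f n‖ * (M * (|(n:ℝ)| + 1) ^ s * ‖R b‖) :=
          mul_le_mul_of_nonneg_left (hbound n b) (norm_nonneg _)
      _ = (M * ‖R b‖) * ((|(n:ℝ)| + 1) ^ s * ‖fourierCoefficient f n‖) := by ring
  refine ⟨hS, hS2, ?_⟩
  have hsumC : ∀ b : V, Summable
      (fun n : ℤ => ((fourierCoefficient f n • a n b : V) : UniformSpace.Completion V)) := by
    intro b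
    apply Summable.of_norm
    simp only [UniformSpace.Completion.norm_coe]
    exact hS2 b
  refine ⟨{ toFun := fun b => ∑' n : ℤ,
              ((fourierCoefficient f n • a n b : V) : UniformSpace.Completion V)
            map_add' := ?_
            map_smul' := ?_ }, fun b => rfl, ?_⟩
  · intro x y
    beta_reduce
    rw [← Summable.tsum_add (hsumC x) (hsumC y)]
    exact tsum_congr fun n => by rw [map_add, smul_add, UniformSpace.Completion.coe_add]
  · intro r x
    simp only [RingHom.id_apply]
    beta_reduce
    rw [← Summable.tsum_const_smul r (hsumC x)]
    exact tsum_congr fun n => by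
      rw [LinearMap.map_smul, smul_comm, UniformSpace.Completion.coe_smul]
  · intro b
    calc ‖∑' n : ℤ, ((fourierCoefficient f n • a n b : V) : UniformSpace.Completion V)‖
        ≤ ∑' n : ℤ, ‖fourierCoefficient f n • a n b‖ := by
          have hsn : Summable (fun n : ℤ =>
              ‖((fourierCoefficient f n • a n b : V) : UniformSpace.Completion V)‖) := by
            simp only [UniformSpace.Completion.norm_coe]
            exact hS2 b
          have h := norm_tsum_le_tsum_norm hsn
          simp only [UniformSpace.Completion.norm_coe] at h
          exact h
      _ ≤ ∑' n : ℤ, (M * ‖R b‖) * ((|(n:ℝ)| + 1) ^ s * ‖fourierCoefficient f n‖) := by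
          apply Summable.tsum_le_tsum ?_ (hS2 b) (hS.mul_left _)
          intro n
          rw [norm_smul]
          calc ‖fourierCoefficient f n‖ * ‖a n b‖
              ≤ ‖fourierCoefficient f n‖ * (M * (|(n:ℝ)| + 1) ^ s * ‖R b‖) :=
                mul_le_mul_of_nonneg_left (hbound n b) (norm_nonneg _)
            _ = (M * ‖R b‖) * ((|(n:ℝ)| + 1) ^ s * ‖fourierCoefficient f n‖) := by ring
      _ = M * (∑' n : ℤ, (|(n : ℝ)| + 1) ^ s * ‖fourierCoefficient f n‖) * ‖R b‖ := by
          rw [tsum_mul_left]; ring
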